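/- Let A ∈ ℝ^{I₁×I₂×I₃} be strictly positive. Suppose positive weight vectors z¹ ∈ ℝ^{I₁}, z² ∈ ℝ^{I₂}, z³ ∈ ℝ^{I₃} and z'¹, z'², z'³ both normalize A in the sense that B[i,j,k] = z¹_i z²_j z³_k A[i,j,k] has all 'slice products' equal to 1 (∏_{j,k} B[i,j,k] = 1 for each i, ∏_{i,k} B[i,j,k] = 1 for each j, ∏_{i,j} B[i,j,k] = 1 for each k), and similarly for z'. Then the two normalized tensors are equal: z¹_i z²_j z³_k A[i,j,k] = z'¹_i z'²_j z'³_k A[i,j,k] for all i,j,k. -/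

import Mathlib

open Finset Real

lemma slice_log {n m : ℕ} (c : ℝ) (u : Fin n → ℝ) (v : Fin m → ℝ) (B : Fin n → Fin m → ℝ)
    (hc : 0 < c) (hu : ∀ a, 0 < u a) (hv : ∀ b, 0 < v b) (hB : ∀ a b, 0 < B a b)
    (h : ∏ a, ∏ b, c * u a * v b * B a b = 1) :
    (n : ℝ) * (m : ℝ) * Real.log c + (m : ℝ) * ∑ a, Real.log (u a)
      + (n : ℝ) * ∑ b, Real.log (v b) + ∑ a, ∑ b, Real.log (B a b) = 0 := by
  have hf : ∀ a b, (0:ℝ) < c * u a * v b * B a b :=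
    fun a b => mul_pos (mul_pos (mul_pos hc (hu a)) (hv b)) (hB a b)
  have h0 : Real.log (∏ a, ∏ b, c * u a * v b * B a b) = 0 := by rw [h, Real.log_one]
  rw [Real.log_prod (fun a _ => (Finset.prod_pos (fun b _ => hf a b)).ne')] at h0
  simp_rw [Real.log_prod (fun b _ => (hf _ b).ne'),
    Real.log_mul (mul_pos (mul_pos hc (hu _)) (hv _)).ne' (hB _ _).ne',
    Real.log_mul (mul_pos hc (hu _)).ne' (hv _).ne',
    Real.log_mul hc.ne' (hu _).ne'] at h0
  simp only [Finset.sum_add_distrib, Finset.sum_const, card_univ, Fintype.card_fin,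
    nsmul_eq_mul, ← Finset.mul_sum] at h0
  linarith [h0]

theorem stmt_14 (I₁ I₂ I₃ : ℕ) (A : Fin I₁ → Fin I₂ → Fin I₃ → ℝ)
    (hA : ∀ i j k, 0 < A i j k)
    (z₁ : Fin I₁ → ℝ) (z₂ : Fin I₂ → ℝ) (z₃ : Fin I₃ → ℝ)
    (w₁ : Fin I₁ → ℝ) (w₂ : Fin I₂ → ℝ) (w₃ : Fin I₃ → ℝ)
    (hz₁ : ∀ i, 0 < z₁ i) (hz₂ : ∀ j, 0 < z₂ j) (hz₃ : ∀ k, 0 < z₃ k)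
    (hw₁ : ∀ i, 0 < w₁ i) (hw₂ : ∀ j, 0 < w₂ j) (hw₃ : ∀ k, 0 < w₃ k)
    (hzs₁ : ∀ i, ∏ j, ∏ k, z₁ i * z₂ j * z₃ k * A i j k = 1)
    (hzs₂ : ∀ j, ∏ i, ∏ k, z₁ i * z₂ j * z₃ k * A i j k = 1)
    (hzs₃ : ∀ k, ∏ i, ∏ j, z₁ i * z₂ j * z₃ k * A i j k = 1)
    (hws₁ : ∀ i, ∏ j, ∏ k, w₁ i * w₂ j * w₃ k * A i j k = 1)
    (hws₂ : ∀ j, ∏ i, ∏ k, w₁ i * w₂ j * w₃ k * A i j k = 1)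
    (hws₃ : ∀ k, ∏ i, ∏ j, w₁ i * w₂ j * w₃ k * A i j k = 1) :
    ∀ i j k, z₁ i * z₂ j * z₃ k * A i j k = w₁ i * w₂ j * w₃ k * A i j k := by
  intro i j k
  have n1pos : (0:ℝ) < I₁ := by exact_mod_cast i.pos
  have n2pos : (0:ℝ) < I₂ := by exact_mod_cast j.pos
  have n3pos : (0:ℝ) < I₃ := by exact_mod_cast k.pos
  -- mode-1 log equations
  have Z1 : ∀ i', (I₂:ℝ) * (I₃:ℝ) * Real.log (z₁ i') + (I₃:ℝ) * ∑ a, Real.log (z₂ a)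
      + (I₂:ℝ) * ∑ b, Real.log (z₃ b) + ∑ a, ∑ b, Real.log (A i' a b) = 0 := fun i' =>
    slice_log _ _ _ _ (hz₁ i') hz₂ hz₃ (fun a b => hA i' a b) (hzs₁ i')
  have W1 : ∀ i', (I₂:ℝ) * (I₃:ℝ) * Real.log (w₁ i') + (I₃:ℝ) * ∑ a, Real.log (w₂ a)
      + (I₂:ℝ) * ∑ b, Real.log (w₃ b) + ∑ a, ∑ b, Real.log (A i' a b) = 0 := fun i' =>
    slice_log _ _ _ _ (hw₁ i') hw₂ hw₃ (fun a b => hA i' a b) (hws₁ i')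
  -- mode-2 log equations
  have Z2 : ∀ j', (I₁:ℝ) * (I₃:ℝ) * Real.log (z₂ j') + (I₃:ℝ) * ∑ a, Real.log (z₁ a)
      + (I₁:ℝ) * ∑ b, Real.log (z₃ b) + ∑ a, ∑ b, Real.log (A a j' b) = 0 := by
    intro j'
    have h' : ∏ a, ∏ b, z₂ j' * z₁ a * z₃ b * A a j' b = 1 := by
      rw [← hzs₂ j']
      exact Finset.prod_congr rfl fun a _ => Finset.prod_congr rfl fun b _ => by ring
    exact slice_log _ _ _ _ (hz₂ j') hz₁ hz₃ (fun a b => hA a j' b) h'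
  have W2 : ∀ j', (I₁:ℝ) * (I₃:ℝ) * Real.log (w₂ j') + (I₃:ℝ) * ∑ a, Real.log (w₁ a)
      + (I₁:ℝ) * ∑ b, Real.log (w₃ b) + ∑ a, ∑ b, Real.log (A a j' b) = 0 := by
    intro j'
    have h' : ∏ a, ∏ b, w₂ j' * w₁ a * w₃ b * A a j' b = 1 := by
      rw [← hws₂ j']
      exact Finset.prod_congr rfl fun a _ => Finset.prod_congr rfl fun b _ => by ring
    exact slice_log _ _ _ _ (hw₂ j') hw₁ hw₃ (fun a b => hA a j' b) h'
  -- mode-3 log equations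
  have Z3 : ∀ k', (I₁:ℝ) * (I₂:ℝ) * Real.log (z₃ k') + (I₂:ℝ) * ∑ a, Real.log (z₁ a)
      + (I₁:ℝ) * ∑ b, Real.log (z₂ b) + ∑ a, ∑ b, Real.log (A a b k') = 0 := by
    intro k'
    have h' : ∏ a, ∏ b, z₃ k' * z₁ a * z₂ b * A a b k' = 1 := by
      rw [← hzs₃ k']
      exact Finset.prod_congr rfl fun a _ => Finset.prod_congr rfl fun b _ => by ring
    exact slice_log _ _ _ _ (hz₃ k') hz₁ hz₂ (fun a b => hA a b k') h'
  have W3 : ∀ k', (I₁:ℝ) * (I₂:ℝ) * Real.log (w₃ k') + (I₂:ℝ) * ∑ a, Real.log (w₁ a)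
      + (I₁:ℝ) * ∑ b, Real.log (w₂ b) + ∑ a, ∑ b, Real.log (A a b k') = 0 := by
    intro k'
    have h' : ∏ a, ∏ b, w₃ k' * w₁ a * w₂ b * A a b k' = 1 := by
      rw [← hws₃ k']
      exact Finset.prod_congr rfl fun a _ => Finset.prod_congr rfl fun b _ => by ring
    exact slice_log _ _ _ _ (hw₃ k') hw₁ hw₂ (fun a b => hA a b k') h'
  -- the mode-2 log ratio is constant
  have g_const : ∀ j', Real.log (w₂ j') - Real.log (z₂ j')
      = Real.log (w₂ j) - Real.log (z₂ j) := by
    intro j'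
    have h13 : (I₁:ℝ) * (I₃:ℝ) ≠ 0 := (mul_pos n1pos n3pos).ne'
    have key : (I₁:ℝ) * (I₃:ℝ) * ((Real.log (w₂ j') - Real.log (z₂ j'))
        - (Real.log (w₂ j) - Real.log (z₂ j))) = 0 := by
      linear_combination W2 j' - Z2 j' - W2 j + Z2 j
    have := (mul_eq_zero.mp key).resolve_left h13
    linarith
  have h_const : ∀ k', Real.log (w₃ k') - Real.log (z₃ k')
      = Real.log (w₃ k) - Real.log (z₃ k) := by
    intro k'
    have h12 : (I₁:ℝ) * (I₂:ℝ) ≠ 0 := (mul_pos n1pos n2pos).ne'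
    have key : (I₁:ℝ) * (I₂:ℝ) * ((Real.log (w₃ k') - Real.log (z₃ k'))
        - (Real.log (w₃ k) - Real.log (z₃ k))) = 0 := by
      linear_combination W3 k' - Z3 k' - W3 k + Z3 k
    have := (mul_eq_zero.mp key).resolve_left h12
    linarith
  have S2 : ∑ a, (Real.log (w₂ a) - Real.log (z₂ a))
      = (I₂:ℝ) * (Real.log (w₂ j) - Real.log (z₂ j)) := by
    rw [Finset.sum_congr rfl (fun a _ => g_const a), Finset.sum_const, card_univ,
      Fintype.card_fin, nsmul_eq_mul]
  have S3 : ∑ b, (Real.log (w₃ b) - Real.log (z₃ b))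
      = (I₃:ℝ) * (Real.log (w₃ k) - Real.log (z₃ k)) := by
    rw [Finset.sum_congr rfl (fun b _ => h_const b), Finset.sum_const, card_univ,
      Fintype.card_fin, nsmul_eq_mul]
  -- combine via the mode-1 equation at i
  have S2' : ∑ a, Real.log (w₂ a) - ∑ a, Real.log (z₂ a)
      = (I₂:ℝ) * (Real.log (w₂ j) - Real.log (z₂ j)) := by
    rw [← Finset.sum_sub_distrib]; exact S2
  have S3' : ∑ b, Real.log (w₃ b) - ∑ b, Real.log (z₃ b)
      = (I₃:ℝ) * (Real.log (w₃ k) - Real.log (z₃ k)) := by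
    rw [← Finset.sum_sub_distrib]; exact S3
  have h23 : (I₂:ℝ) * (I₃:ℝ) ≠ 0 := (mul_pos n2pos n3pos).ne'
  have key : (I₂:ℝ) * (I₃:ℝ) * ((Real.log (w₁ i) - Real.log (z₁ i))
      + (Real.log (w₂ j) - Real.log (z₂ j)) + (Real.log (w₃ k) - Real.log (z₃ k))) = 0 := by
    linear_combination W1 i - Z1 i - (I₃:ℝ) * S2' - (I₂:ℝ) * S3'
  have hsum : Real.log (z₁ i) + Real.log (z₂ j) + Real.log (z₃ k)
      = Real.log (w₁ i) + Real.log (w₂ j) + Real.log (w₃ k) := by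
    have := (mul_eq_zero.mp key).resolve_left h23
    linarith
  have hmain : z₁ i * z₂ j * z₃ k = w₁ i * w₂ j * w₃ k := by
    rw [← Real.exp_log (mul_pos (mul_pos (hz₁ i) (hz₂ j)) (hz₃ k)),
      ← Real.exp_log (mul_pos (mul_pos (hw₁ i) (hw₂ j)) (hw₃ k)),
      Real.log_mul (mul_pos (hz₁ i) (hz₂ j)).ne' (hz₃ k).ne',
      Real.log_mul (hz₁ i).ne' (hz₂ j).ne',
      Real.log_mul (mul_pos (hw₁ i) (hw₂ j)).ne' (hw₃ k).ne',
      Real.log_mul (hw₁ i).ne' (hw₂ j).ne']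
    exact congrArg Real.exp hsum
  rw [hmain]
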